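/- Let U be a T×T upper triangular matrix with nonnegative diagonal entries, where T ≥ 2. Then ‖U − I‖_op ≤ 2 log_2(4T) ‖U^T U − I‖_op and ‖U − I‖_op² ≤ 9 log_2(4T) ‖U^T U − I‖_op. -/

import Mathlib

open Matrix Finset

noncomputable section

/-- Euclidean norm of a finitely-indexed real vector. -/
def enorm' {ι : Type*} [Fintype ι] (v : ι → ℝ) : ℝ := Real.sqrt (∑ i, v i ^ 2)

/-- Spectral (Euclidean operator) norm of a real matrix. -/
def opNorm {ι κ : Type*} [Fintype ι] [Fintype κ] (M : Matrix ι κ ℝ) : ℝ :=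
  sSup ((fun v => enorm' (M.mulVec v)) '' {v | enorm' v ≤ 1})

namespace CholAux

variable {ι κ : Type*} [Fintype ι] [Fintype κ]

lemma en_nonneg (v : ι → ℝ) : 0 ≤ enorm' v := Real.sqrt_nonneg _

lemma en_sq (v : ι → ℝ) : enorm' v ^ 2 = ∑ i, v i ^ 2 :=
  Real.sq_sqrt (by positivity)

lemma en_zero : enorm' (0 : ι → ℝ) = 0 := by simp [enorm']

lemma en_eq_zero_iff {v : ι → ℝ} : enorm' v = 0 ↔ v = 0 := by
  constructor
  · intro h
    have h2 : ∑ i, v i ^ 2 = 0 := by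
      have := en_sq v
      rw [h] at this
      simpa using this.symm
    funext i
    have := (Finset.sum_eq_zero_iff_of_nonneg (fun i _ => sq_nonneg (v i))).1 h2 i (mem_univ i)
    exact pow_eq_zero_iff (two_ne_zero) |>.1 this
  · rintro rfl; exact en_zero

lemma en_mono {v w : ι → ℝ} (h : ∀ i, v i ^ 2 ≤ w i ^ 2) : enorm' v ≤ enorm' w :=
  Real.sqrt_le_sqrt (Finset.sum_le_sum fun i _ => h i)

lemma abs_le_en (v : ι → ℝ) (i : ι) : |v i| ≤ enorm' v := by
  rw [← Real.sqrt_sq_eq_abs]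
  exact Real.sqrt_le_sqrt (Finset.single_le_sum (f := fun i => v i ^ 2)
    (fun i _ => sq_nonneg _) (mem_univ i))

lemma abs_dot_le (v w : ι → ℝ) : |v ⬝ᵥ w| ≤ enorm' v * enorm' w := by
  have h1 : |v ⬝ᵥ w| ≤ ∑ i, |v i| * |w i| := by
    refine (Finset.abs_sum_le_sum_abs _ _).trans ?_
    simp_rw [abs_mul]
    exact le_rfl
  refine h1.trans ?_
  have h2 : (∑ i, |v i| * |w i|) ^ 2 ≤ (∑ i, v i ^ 2) * ∑ i, w i ^ 2 := by
    have := Finset.sum_mul_sq_le_sq_mul_sq univ (fun i => |v i|) (fun i => |w i|)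
    simpa [sq_abs] using this
  have h3 : (0:ℝ) ≤ ∑ i, |v i| * |w i| :=
    Finset.sum_nonneg fun i _ => mul_nonneg (abs_nonneg _) (abs_nonneg _)
  calc ∑ i, |v i| * |w i| = Real.sqrt ((∑ i, |v i| * |w i|) ^ 2) := (Real.sqrt_sq h3).symm
    _ ≤ Real.sqrt ((∑ i, v i ^ 2) * ∑ i, w i ^ 2) := Real.sqrt_le_sqrt h2
    _ = enorm' v * enorm' w := by
        rw [Real.sqrt_mul (by positivity)]; rfl

lemma dot_self_eq (v : ι → ℝ) : v ⬝ᵥ v = enorm' v ^ 2 := by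
  rw [en_sq]; simp [dotProduct, sq]

lemma en_add_le (v w : ι → ℝ) : enorm' (v + w) ≤ enorm' v + enorm' w := by
  have hd : v ⬝ᵥ w ≤ enorm' v * enorm' w := (le_abs_self _).trans (abs_dot_le v w)
  have hexp : ∑ i, (v i + w i) ^ 2 = (∑ i, v i ^ 2) + 2 * (v ⬝ᵥ w) + ∑ i, w i ^ 2 := by
    simp_rw [add_sq]
    rw [Finset.sum_add_distrib, Finset.sum_add_distrib]
    congr 2
    rw [dotProduct, Finset.mul_sum]
    exact Finset.sum_congr rfl fun i _ => by ring
  have h : ∑ i, (v i + w i) ^ 2 ≤ (enorm' v + enorm' w) ^ 2 := by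
    nlinarith [en_sq v, en_sq w]
  calc enorm' (v + w) = Real.sqrt (∑ i, (v i + w i) ^ 2) := rfl
    _ ≤ Real.sqrt ((enorm' v + enorm' w) ^ 2) := Real.sqrt_le_sqrt h
    _ = enorm' v + enorm' w := Real.sqrt_sq (add_nonneg (en_nonneg v) (en_nonneg w))

lemma en_neg (v : ι → ℝ) : enorm' (-v) = enorm' v := by
  unfold enorm'; simp

lemma en_sub_le (v w : ι → ℝ) : enorm' (v - w) ≤ enorm' v + enorm' w := by
  rw [sub_eq_add_neg]
  exact (en_add_le v (-w)).trans (by rw [en_neg])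

lemma en_smul (c : ℝ) (v : ι → ℝ) : enorm' (c • v) = |c| * enorm' v := by
  unfold enorm'
  simp_rw [Pi.smul_apply, smul_eq_mul, mul_pow, ← Finset.mul_sum]
  rw [Real.sqrt_mul (sq_nonneg c), Real.sqrt_sq_eq_abs]

lemma en_sum_le {α : Type*} (s : Finset α) (f : α → ι → ℝ) :
    enorm' (∑ a ∈ s, f a) ≤ ∑ a ∈ s, enorm' (f a) := by
  classical
  induction s using Finset.cons_induction with
  | empty => simp [en_zero]
  | cons a s ha ih =>
    rw [Finset.sum_cons, Finset.sum_cons]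
    exact (en_add_le _ _).trans (by gcongr)

lemma en_mulVec_le_frob (M : Matrix κ ι ℝ) (v : ι → ℝ) :
    enorm' (M.mulVec v) ≤ Real.sqrt (∑ i, ∑ j, M i j ^ 2) * enorm' v := by
  have h : ∀ i, (M.mulVec v i) ^ 2 ≤ (∑ j, M i j ^ 2) * ∑ j, v j ^ 2 := fun i =>
    Finset.sum_mul_sq_le_sq_mul_sq univ (fun j => M i j) v
  have h2 : ∑ i, (M.mulVec v i) ^ 2 ≤ (∑ i, ∑ j, M i j ^ 2) * ∑ j, v j ^ 2 := by
    rw [Finset.sum_mul]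
    exact Finset.sum_le_sum fun i _ => h i
  calc enorm' (M.mulVec v) ≤ Real.sqrt ((∑ i, ∑ j, M i j ^ 2) * ∑ j, v j ^ 2) :=
        Real.sqrt_le_sqrt h2
    _ = _ := by rw [Real.sqrt_mul (by positivity)]; rfl

lemma bddAbove_opSet (M : Matrix κ ι ℝ) :
    BddAbove ((fun v => enorm' (M.mulVec v)) '' {v | enorm' v ≤ 1}) := by
  refine ⟨Real.sqrt (∑ i, ∑ j, M i j ^ 2), ?_⟩
  rintro y ⟨v, hv, rfl⟩
  refine (en_mulVec_le_frob M v).trans ?_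
  calc Real.sqrt (∑ i, ∑ j, M i j ^ 2) * enorm' v
      ≤ Real.sqrt (∑ i, ∑ j, M i j ^ 2) * 1 :=
        mul_le_mul_of_nonneg_left hv (Real.sqrt_nonneg _)
    _ = _ := mul_one _

lemma opNorm_nonneg (M : Matrix κ ι ℝ) : 0 ≤ opNorm M := by
  have h0 : (0:ℝ) ∈ (fun v => enorm' (M.mulVec v)) '' {v | enorm' v ≤ 1} := by
    refine ⟨0, by simp [Set.mem_setOf_eq, en_zero], ?_⟩
    simp [Matrix.mulVec_zero, en_zero]
  exact le_csSup (bddAbove_opSet M) h0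

lemma en_mulVec_le (M : Matrix κ ι ℝ) (v : ι → ℝ) :
    enorm' (M.mulVec v) ≤ opNorm M * enorm' v := by
  rcases eq_or_ne (enorm' v) 0 with hv | hv
  · rw [en_eq_zero_iff.1 hv]
    simp [Matrix.mulVec_zero, en_zero, hv]
  · have hvpos : 0 < enorm' v := lt_of_le_of_ne (en_nonneg v) (Ne.symm hv)
    set u : ι → ℝ := (enorm' v)⁻¹ • v with hu
    have hun : enorm' u = 1 := by
      rw [hu, en_smul, abs_of_nonneg (inv_nonneg.2 (en_nonneg v)), inv_mul_cancel₀ hv]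
    have hmem : enorm' (M.mulVec u) ∈ (fun v => enorm' (M.mulVec v)) '' {v | enorm' v ≤ 1} :=
      ⟨u, by simp [Set.mem_setOf_eq, hun], rfl⟩
    have hle : enorm' (M.mulVec u) ≤ opNorm M := le_csSup (bddAbove_opSet M) hmem
    have hMu : enorm' (M.mulVec u) = (enorm' v)⁻¹ * enorm' (M.mulVec v) := by
      rw [hu, Matrix.mulVec_smul, en_smul, abs_of_nonneg (inv_nonneg.2 (en_nonneg v))]
    rw [hMu] at hle
    calc enorm' (M.mulVec v) = ((enorm' v)⁻¹ * enorm' (M.mulVec v)) * enorm' v := by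
          field_simp
      _ ≤ opNorm M * enorm' v := mul_le_mul_of_nonneg_right hle (en_nonneg v)

lemma opNorm_le {M : Matrix κ ι ℝ} {c : ℝ} (hc : 0 ≤ c)
    (h : ∀ v, enorm' (M.mulVec v) ≤ c * enorm' v) : opNorm M ≤ c := by
  refine csSup_le ⟨0, 0, by simp [Set.mem_setOf_eq, en_zero], by simp [Matrix.mulVec_zero, en_zero]⟩ ?_
  rintro y ⟨v, hv, rfl⟩
  refine (h v).trans ?_
  calc c * enorm' v ≤ c * 1 := mul_le_mul_of_nonneg_left hv hc
    _ = c := mul_one c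

section Square
set_option linter.unusedSectionVars false
variable {n : Type*} [Fintype n] [DecidableEq n]

lemma en_mulVec_sq_eq (M : Matrix n n ℝ) (v : n → ℝ) :
    enorm' (M.mulVec v) ^ 2 = v ⬝ᵥ ((Mᵀ * M).mulVec v) := by
  have h : v ⬝ᵥ ((Mᵀ * M).mulVec v) = (M.mulVec v) ⬝ᵥ (M.mulVec v) := by
    rw [← Matrix.mulVec_mulVec, Matrix.dotProduct_mulVec, Matrix.vecMul_transpose]
  rw [h, dot_self_eq]

lemma quad_key (M : Matrix n n ℝ) (v : n → ℝ) :
    enorm' (M.mulVec v) ^ 2 = enorm' v ^ 2 + v ⬝ᵥ ((Mᵀ * M - 1).mulVec v) := by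
  rw [en_mulVec_sq_eq]
  have h : (Mᵀ * M).mulVec v = v + (Mᵀ * M - 1).mulVec v := by
    rw [Matrix.sub_mulVec, Matrix.one_mulVec]
    abel
  rw [h, dotProduct_add, dot_self_eq]

lemma quad_abs (M : Matrix n n ℝ) (v : n → ℝ) :
    |v ⬝ᵥ ((Mᵀ * M - 1).mulVec v)| ≤ opNorm (Mᵀ * M - 1) * enorm' v ^ 2 := by
  refine (abs_dot_le _ _).trans ?_
  have h := en_mulVec_le (Mᵀ * M - 1) v
  have h2 := en_nonneg v
  nlinarith [en_nonneg ((Mᵀ * M - 1).mulVec v)]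

lemma quad_upper (M : Matrix n n ℝ) (v : n → ℝ) :
    enorm' (M.mulVec v) ^ 2 ≤ (1 + opNorm (Mᵀ * M - 1)) * enorm' v ^ 2 := by
  have h1 := quad_key M v
  have h2 := (abs_le.1 (quad_abs M v)).2
  nlinarith

lemma quad_lower (M : Matrix n n ℝ) (v : n → ℝ) :
    (1 - opNorm (Mᵀ * M - 1)) * enorm' v ^ 2 ≤ enorm' (M.mulVec v) ^ 2 := by
  have h1 := quad_key M v
  have h2 := (abs_le.1 (quad_abs M v)).1
  nlinarith

lemma en_M_le (M : Matrix n n ℝ) (v : n → ℝ) :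
    enorm' (M.mulVec v) ≤ Real.sqrt (1 + opNorm (Mᵀ * M - 1)) * enorm' v := by
  have h := quad_upper M v
  calc enorm' (M.mulVec v) = Real.sqrt (enorm' (M.mulVec v) ^ 2) :=
        (Real.sqrt_sq (en_nonneg _)).symm
    _ ≤ Real.sqrt ((1 + opNorm (Mᵀ * M - 1)) * enorm' v ^ 2) := Real.sqrt_le_sqrt h
    _ = _ := by
        rw [Real.sqrt_mul (by nlinarith [opNorm_nonneg (Mᵀ * M - 1)]), Real.sqrt_sq (en_nonneg _)]

lemma isUnit_of_small (M : Matrix n n ℝ) (hε : opNorm (Mᵀ * M - 1) < 1) : IsUnit M := by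
  rw [← Matrix.mulVec_injective_iff_isUnit]
  intro v w hvw
  have h : M.mulVec (v - w) = 0 := by
    rw [Matrix.mulVec_sub, hvw, sub_self]
  have h2 := quad_lower M (v - w)
  rw [h, en_zero] at h2
  have h3 : enorm' (v - w) ^ 2 ≤ 0 := by nlinarith [en_nonneg (v - w)]
  have h4 : enorm' (v - w) = 0 := by nlinarith [en_nonneg (v - w)]
  have := en_eq_zero_iff.1 h4
  exact sub_eq_zero.1 this

lemma inv_bound (M : Matrix n n ℝ) (hε : opNorm (Mᵀ * M - 1) < 1) (w : n → ℝ) :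
    enorm' (M⁻¹.mulVec w) ≤ (Real.sqrt (1 - opNorm (Mᵀ * M - 1)))⁻¹ * enorm' w := by
  set ε := opNorm (Mᵀ * M - 1) with hεdef
  have hM : IsUnit M := isUnit_of_small M hε
  have hMdet : IsUnit M.det := (Matrix.isUnit_iff_isUnit_det M).1 hM
  have hrec : M.mulVec (M⁻¹.mulVec w) = w := by
    rw [Matrix.mulVec_mulVec, Matrix.mul_nonsing_inv M hMdet, Matrix.one_mulVec]
  have h2 := quad_lower M (M⁻¹.mulVec w)
  rw [hrec] at h2
  have hsp : (0:ℝ) < Real.sqrt (1 - ε) := Real.sqrt_pos.2 (by linarith)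
  have key : Real.sqrt (1 - ε) * enorm' (M⁻¹.mulVec w) ≤ enorm' w := by
    have hsq : (Real.sqrt (1 - ε) * enorm' (M⁻¹.mulVec w)) ^ 2 ≤ enorm' w ^ 2 := by
      rw [mul_pow, Real.sq_sqrt (by linarith : (0:ℝ) ≤ 1 - ε)]
      nlinarith
    calc Real.sqrt (1 - ε) * enorm' (M⁻¹.mulVec w)
        = Real.sqrt ((Real.sqrt (1 - ε) * enorm' (M⁻¹.mulVec w)) ^ 2) :=
          (Real.sqrt_sq (mul_nonneg hsp.le (en_nonneg _))).symm
      _ ≤ Real.sqrt (enorm' w ^ 2) := Real.sqrt_le_sqrt hsq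
      _ = enorm' w := Real.sqrt_sq (en_nonneg _)
  rw [inv_mul_eq_div, le_div_iff₀ hsp]
  linarith [key]

lemma opNorm_transpose_le (M : Matrix n n ℝ) : opNorm Mᵀ ≤ opNorm M := by
  refine opNorm_le (opNorm_nonneg M) fun v => ?_
  have key : enorm' (Mᵀ.mulVec v) ^ 2 = (M.mulVec (Mᵀ.mulVec v)) ⬝ᵥ v := by
    rw [← dot_self_eq, Matrix.dotProduct_mulVec, Matrix.vecMul_transpose]
  rcases eq_or_ne (enorm' (Mᵀ.mulVec v)) 0 with h0 | h0
  · rw [h0]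
    exact mul_nonneg (opNorm_nonneg M) (en_nonneg v)
  · have hpos : 0 < enorm' (Mᵀ.mulVec v) := lt_of_le_of_ne (en_nonneg _) (Ne.symm h0)
    have h1 : enorm' (Mᵀ.mulVec v) ^ 2 ≤ enorm' (M.mulVec (Mᵀ.mulVec v)) * enorm' v := by
      rw [key]
      exact (le_abs_self _).trans (abs_dot_le _ _)
    have h2 := en_mulVec_le M (Mᵀ.mulVec v)
    nlinarith [en_nonneg v, opNorm_nonneg M]

lemma en_diag_mulVec_le {c : ℝ} (hc : 0 ≤ c) (d : n → ℝ) (hd : ∀ i, |d i| ≤ c) (v : n → ℝ) :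
    enorm' ((Matrix.diagonal d).mulVec v) ≤ c * enorm' v := by
  have h : ∀ i, ((Matrix.diagonal d).mulVec v i) ^ 2 ≤ c ^ 2 * v i ^ 2 := by
    intro i
    rw [Matrix.mulVec_diagonal]
    have : d i ^ 2 ≤ c ^ 2 := by
      rw [← sq_abs (d i)]
      exact pow_le_pow_left₀ (abs_nonneg _) (hd i) 2
    nlinarith [sq_nonneg (v i)]
  calc enorm' ((Matrix.diagonal d).mulVec v)
      ≤ Real.sqrt (∑ i, c ^ 2 * v i ^ 2) :=
        Real.sqrt_le_sqrt (Finset.sum_le_sum fun i _ => h i)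
    _ = c * enorm' v := by
        rw [← Finset.mul_sum, Real.sqrt_mul (sq_nonneg c), Real.sqrt_sq hc]
        rfl

end Square

section FinT

variable {T : ℕ}

def Pl (T m : ℕ) : Matrix (Fin T) (Fin T) ℝ :=
  Matrix.diagonal (fun i => if (i:ℕ) < m then 1 else 0)

def Pg (T m : ℕ) : Matrix (Fin T) (Fin T) ℝ :=
  Matrix.diagonal (fun i => if m ≤ (i:ℕ) then 1 else 0)

def Nmat (U : Matrix (Fin T) (Fin T) ℝ) (s : ℕ) : Matrix (Fin T) (Fin T) ℝ :=
  Matrix.of fun i j =>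
    if ((i:ℕ)/(2*s) = (j:ℕ)/(2*s) ∧ (i:ℕ)/s < (j:ℕ)/s) then U i j else 0

lemma corner_apply (M : Matrix (Fin T) (Fin T) ℝ) (m : ℕ) (i j : Fin T) :
    (Pl T m * M * Pg T m) i j
      = (if (i:ℕ) < m then (1:ℝ) else 0) * M i j * (if m ≤ (j:ℕ) then 1 else 0) := by
  rw [Pl, Pg, Matrix.mul_diagonal, Matrix.diagonal_mul]

lemma en_Pl_le (m : ℕ) (v : Fin T → ℝ) : enorm' ((Pl T m).mulVec v) ≤ enorm' v := by
  have := en_diag_mulVec_le (c := 1) zero_le_one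
    (fun i : Fin T => if (i:ℕ) < m then (1:ℝ) else 0)
    (fun i => by split_ifs <;> norm_num) v
  simpa [Pl] using this

lemma en_Pg_le (m : ℕ) (v : Fin T → ℝ) : enorm' ((Pg T m).mulVec v) ≤ enorm' v := by
  have := en_diag_mulVec_le (c := 1) zero_le_one
    (fun i : Fin T => if m ≤ (i:ℕ) then (1:ℝ) else 0)
    (fun i => by split_ifs <;> norm_num) v
  simpa [Pg] using this

variable (U : Matrix (Fin T) (Fin T) ℝ)

lemma inv_upper (hUpper : ∀ i j : Fin T, j < i → U i j = 0)
    (hε : opNorm (Uᵀ * U - 1) < 1) :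
    ∀ i j : Fin T, j < i → U⁻¹ i j = 0 := by
  have hM := isUnit_of_small U hε
  obtain ⟨inst⟩ := hM.nonempty_invertible
  letI := inst
  have hBT : U.BlockTriangular id := fun i j h => hUpper i j h
  have h2 := Matrix.blockTriangular_inv_of_blockTriangular hBT
  exact fun i j h => h2 h

lemma corner_id (hUpper : ∀ i j : Fin T, j < i → U i j = 0)
    (hε : opNorm (Uᵀ * U - 1) < 1) (m : ℕ) :
    Pl T m * U * Pg T m = Pl T m * (U⁻¹)ᵀ * (Uᵀ * U - 1) * Pg T m := by
  have hM := isUnit_of_small U hε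
  have hMdet := (Matrix.isUnit_iff_isUnit_det U).1 hM
  have hVU : (U⁻¹)ᵀ * Uᵀ = 1 := by
    rw [← Matrix.transpose_mul, Matrix.mul_nonsing_inv U hMdet, Matrix.transpose_one]
  have h2 : Pl T m * (U⁻¹)ᵀ * Pg T m = 0 := by
    ext i j
    rw [Matrix.mul_assoc, ← Matrix.mul_assoc, corner_apply]
    by_cases hi : (i:ℕ) < m
    · by_cases hj : m ≤ (j:ℕ)
      · have hij : i < j := by rw [Fin.lt_def]; omega
        have hz : U⁻¹ j i = 0 := inv_upper U hUpper hε j i hij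
        simp [Matrix.transpose_apply, hz]
      · simp [hj]
    · simp [hi]
  have h3 : Pl T m * (U⁻¹)ᵀ * (Uᵀ * U) = Pl T m * U := by
    rw [← Matrix.mul_assoc (Pl T m * (U⁻¹)ᵀ) Uᵀ U, Matrix.mul_assoc (Pl T m) (U⁻¹)ᵀ Uᵀ, hVU,
      Matrix.mul_one]
  symm
  rw [Matrix.mul_sub, Matrix.mul_one, h3, Matrix.sub_mul, h2, sub_zero]

lemma corner_en_le (hUpper : ∀ i j : Fin T, j < i → U i j = 0)
    (hε : opNorm (Uᵀ * U - 1) < 1) (m : ℕ) (v : Fin T → ℝ) :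
    enorm' ((Pl T m * U * Pg T m).mulVec v)
      ≤ (Real.sqrt (1 - opNorm (Uᵀ * U - 1)))⁻¹ * opNorm (Uᵀ * U - 1) * enorm' v := by
  set ε := opNorm (Uᵀ * U - 1) with hεdef
  set κ := (Real.sqrt (1 - ε))⁻¹ with hκdef
  have hκ0 : 0 ≤ κ := inv_nonneg.2 (Real.sqrt_nonneg _)
  have hε0 : 0 ≤ ε := opNorm_nonneg _
  have hVop : opNorm U⁻¹ ≤ κ :=
    opNorm_le hκ0 (fun w => inv_bound U hε w)
  have hVTop : opNorm (U⁻¹)ᵀ ≤ κ := (opNorm_transpose_le _).trans hVop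
  rw [corner_id U hUpper hε m]
  rw [← Matrix.mulVec_mulVec, ← Matrix.mulVec_mulVec, ← Matrix.mulVec_mulVec]
  calc enorm' ((Pl T m).mulVec ((U⁻¹)ᵀ.mulVec ((Uᵀ * U - 1).mulVec ((Pg T m).mulVec v))))
      ≤ enorm' ((U⁻¹)ᵀ.mulVec ((Uᵀ * U - 1).mulVec ((Pg T m).mulVec v))) := en_Pl_le _ _
    _ ≤ opNorm (U⁻¹)ᵀ * enorm' ((Uᵀ * U - 1).mulVec ((Pg T m).mulVec v)) := en_mulVec_le _ _
    _ ≤ κ * enorm' ((Uᵀ * U - 1).mulVec ((Pg T m).mulVec v)) :=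
        mul_le_mul_of_nonneg_right hVTop (en_nonneg _)
    _ ≤ κ * (ε * enorm' ((Pg T m).mulVec v)) :=
        mul_le_mul_of_nonneg_left (en_mulVec_le _ _) hκ0
    _ ≤ κ * (ε * enorm' v) :=
        mul_le_mul_of_nonneg_left
          (mul_le_mul_of_nonneg_left (en_Pg_le _ _) hε0) hκ0
    _ = κ * ε * enorm' v := by ring

lemma nat_iff {s i j : ℕ} (hs : 0 < s) (q : ℕ) (hq : i/(2*s) = q) :
    ((i/(2*s) = j/(2*s) ∧ i/s < j/s) ↔ (i < (2*q+1)*s ∧ (2*q+1)*s ≤ j ∧ j/(2*s) = q)) := by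
  have ha : i/(2*s) = i/s/2 := by rw [Nat.div_div_eq_div_mul, mul_comm]
  have hb : j/(2*s) = j/s/2 := by rw [Nat.div_div_eq_div_mul, mul_comm]
  have h1 : i < (2*q+1)*s ↔ i/s < 2*q+1 := (Nat.div_lt_iff_lt_mul hs).symm
  have h2 : (2*q+1)*s ≤ j ↔ 2*q+1 ≤ j/s := (Nat.le_div_iff_mul_le hs).symm
  rw [h1, h2, ha, hb]
  rw [ha] at hq
  generalize i/s = a at *
  generalize j/s = b at *
  omega

def gfun (T s : ℕ) (i : Fin T) : ℕ := (i:ℕ)/(2*s)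

def wvec (T s : ℕ) (v : Fin T → ℝ) (q : ℕ) : Fin T → ℝ :=
  fun j => if gfun T s j = q then v j else 0

lemma level_en_le (hUpper : ∀ i j : Fin T, j < i → U i j = 0)
    (hε : opNorm (Uᵀ * U - 1) < 1) {s : ℕ} (hs : 0 < s) (v : Fin T → ℝ) :
    enorm' ((Nmat U s).mulVec v)
      ≤ (Real.sqrt (1 - opNorm (Uᵀ * U - 1)))⁻¹ * opNorm (Uᵀ * U - 1) * enorm' v := by
  classical
  set ε := opNorm (Uᵀ * U - 1) with hεdef
  set κ := (Real.sqrt (1 - ε))⁻¹ with hκdef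
  have hκ0 : 0 ≤ κ := inv_nonneg.2 (Real.sqrt_nonneg _)
  have hε0 : 0 ≤ ε := opNorm_nonneg _
  have hκε0 : 0 ≤ κ * ε := mul_nonneg hκ0 hε0
  have rowEq : ∀ i : Fin T,
      (Nmat U s).mulVec v i
        = (Pl T ((2*(gfun T s i)+1)*s) * U * Pg T ((2*(gfun T s i)+1)*s)).mulVec
            (wvec T s v (gfun T s i)) i := by
    intro i
    simp only [Matrix.mulVec, dotProduct]
    refine Finset.sum_congr rfl fun j _ => ?_
    have hiff := nat_iff (i := (i:ℕ)) (j := (j:ℕ)) hs (gfun T s i) rfl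
    rw [corner_apply]
    show (Nmat U s) i j * v j = _
    by_cases h : ((i:ℕ)/(2*s) = (j:ℕ)/(2*s) ∧ (i:ℕ)/s < (j:ℕ)/s)
    · obtain ⟨h1, h2, h3⟩ := hiff.1 h
      have hgj : gfun T s j = gfun T s i := h3
      simp [Nmat, h, h1, h2, h3, wvec, hgj]
    · have hNz : (Nmat U s) i j = 0 := by simp [Nmat, h]
      rw [hNz, zero_mul]
      by_cases hgj : gfun T s j = gfun T s i
      · by_cases hi1 : (i:ℕ) < (2*(gfun T s i)+1)*s
        · by_cases hj1 : (2*(gfun T s i)+1)*s ≤ (j:ℕ)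
          · exact absurd (hiff.2 ⟨hi1, hj1, hgj⟩) h
          · simp [hj1]
        · simp [hi1]
      · simp [wvec, hgj]
  have keysq : enorm' ((Nmat U s).mulVec v) ^ 2 ≤ (κ*ε)^2 * enorm' v ^ 2 := by
    rw [en_sq]
    have hfib := Finset.sum_fiberwise_of_maps_to (g := gfun T s)
        (fun x (_ : x ∈ Finset.univ) => Finset.mem_image_of_mem (gfun T s) (Finset.mem_univ x))
        (fun i => ((Nmat U s).mulVec v i)^2)
    rw [← hfib]
    have step1 : ∀ q ∈ Finset.image (gfun T s) Finset.univ,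
        (∑ i ∈ Finset.univ.filter (fun i => gfun T s i = q), ((Nmat U s).mulVec v i)^2)
          ≤ (κ*ε)^2 * ∑ j ∈ Finset.univ.filter (fun j => gfun T s j = q), v j ^ 2 := by
      intro q _
      set C : Matrix (Fin T) (Fin T) ℝ := Pl T ((2*q+1)*s) * U * Pg T ((2*q+1)*s) with hCdef
      have h1 : (∑ i ∈ Finset.univ.filter (fun i => gfun T s i = q),
            ((Nmat U s).mulVec v i)^2)
          = ∑ i ∈ Finset.univ.filter (fun i => gfun T s i = q),
              (C.mulVec (wvec T s v q) i)^2 := by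
        refine Finset.sum_congr rfl fun i hi => ?_
        rw [Finset.mem_filter] at hi
        rw [rowEq i, hi.2]
      rw [h1]
      have h2 : (∑ i ∈ Finset.univ.filter (fun i => gfun T s i = q),
            (C.mulVec (wvec T s v q) i)^2)
          ≤ ∑ i, (C.mulVec (wvec T s v q) i)^2 :=
        Finset.sum_le_sum_of_subset_of_nonneg (Finset.filter_subset _ _)
          (fun i _ _ => sq_nonneg _)
      refine h2.trans ?_
      have h4 := corner_en_le U hUpper hε ((2*q+1)*s) (wvec T s v q)
      rw [← hεdef, ← hκdef] at h4
      have h5 : enorm' (C.mulVec (wvec T s v q))^2 ≤ (κ*ε)^2 * enorm' (wvec T s v q)^2 := by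
        nlinarith [en_nonneg (C.mulVec (wvec T s v q)), en_nonneg (wvec T s v q)]
      have h6 : enorm' (wvec T s v q)^2
          = ∑ j ∈ Finset.univ.filter (fun j => gfun T s j = q), v j ^2 := by
        rw [en_sq, Finset.sum_filter]
        refine Finset.sum_congr rfl fun j _ => ?_
        by_cases hj : gfun T s j = q <;> simp [wvec, hj]
      calc (∑ i, (C.mulVec (wvec T s v q) i)^2)
          = enorm' (C.mulVec (wvec T s v q))^2 := (en_sq _).symm
        _ ≤ (κ*ε)^2 * enorm' (wvec T s v q)^2 := h5
        _ = (κ*ε)^2 * ∑ j ∈ Finset.univ.filter (fun j => gfun T s j = q), v j ^2 := by rw [h6]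
    calc (∑ q ∈ Finset.image (gfun T s) Finset.univ,
          ∑ i ∈ Finset.univ.filter (fun i => gfun T s i = q), ((Nmat U s).mulVec v i)^2)
        ≤ ∑ q ∈ Finset.image (gfun T s) Finset.univ,
            (κ*ε)^2 * ∑ j ∈ Finset.univ.filter (fun j => gfun T s j = q), v j ^2 :=
          Finset.sum_le_sum step1
      _ = (κ*ε)^2 * ∑ q ∈ Finset.image (gfun T s) Finset.univ,
            ∑ j ∈ Finset.univ.filter (fun j => gfun T s j = q), v j ^2 := by
          rw [Finset.mul_sum]
      _ = (κ*ε)^2 * ∑ j, v j ^2 := by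
          rw [Finset.sum_fiberwise_of_maps_to
            (fun x (_ : x ∈ Finset.univ) => Finset.mem_image_of_mem (gfun T s) (Finset.mem_univ x))
            (fun j => v j ^2)]
      _ = (κ*ε)^2 * enorm' v ^2 := by rw [en_sq]
  calc enorm' ((Nmat U s).mulVec v)
      = Real.sqrt (enorm' ((Nmat U s).mulVec v)^2) := (Real.sqrt_sq (en_nonneg _)).symm
    _ ≤ Real.sqrt ((κ*ε)^2 * enorm' v^2) := Real.sqrt_le_sqrt keysq
    _ = κ * ε * enorm' v := by
        rw [Real.sqrt_mul (sq_nonneg _), Real.sqrt_sq hκε0, Real.sqrt_sq (en_nonneg _)]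

lemma sum_mulVec {α : Type*} (sf : Finset α) (f : α → Matrix (Fin T) (Fin T) ℝ)
    (v : Fin T → ℝ) :
    (∑ a ∈ sf, f a).mulVec v = ∑ a ∈ sf, (f a).mulVec v := by
  ext i
  simp only [Matrix.mulVec, dotProduct, Matrix.sum_apply, Finset.sum_apply, Finset.sum_mul]
  exact Finset.sum_comm

lemma decomp (hUpper : ∀ i j : Fin T, j < i → U i j = 0) :
    U - 1 = Matrix.diagonal (fun i => U i i - 1)
      + ∑ t ∈ Finset.range (Nat.clog 2 T), Nmat U (2^t) := by
  have hTK : T ≤ 2 ^ Nat.clog 2 T := Nat.le_pow_clog one_lt_two T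
  ext i j
  simp only [Matrix.sub_apply, Matrix.add_apply, Matrix.sum_apply]
  rcases eq_or_ne i j with rfl | hij
  · rw [Matrix.one_apply_eq, Matrix.diagonal_apply_eq]
    have hz : ∀ t ∈ Finset.range (Nat.clog 2 T), (Nmat U (2^t)) i i = 0 := by
      intro t _
      simp [Nmat]
    rw [Finset.sum_eq_zero hz]
    ring
  · rw [Matrix.one_apply_ne hij, Matrix.diagonal_apply_ne _ hij]
    rcases lt_or_gt_of_ne hij with hlt | hgt
    · have hijn : (i:ℕ) < (j:ℕ) := hlt
      have termEq : ∀ t ∈ Finset.range (Nat.clog 2 T),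
          (Nmat U (2^t)) i j
            = ((if (i:ℕ)/2^(t+1) = (j:ℕ)/2^(t+1) then (1:ℝ) else 0)
               - (if (i:ℕ)/2^t = (j:ℕ)/2^t then (1:ℝ) else 0)) * U i j := by
        intro t _
        have h2t : 2*2^t = 2^(t+1) := by rw [pow_succ]; ring
        have hmono : (i:ℕ)/2^t = (j:ℕ)/2^t → (i:ℕ)/2^(t+1) = (j:ℕ)/2^(t+1) := by
          intro h
          rw [pow_succ, ← Nat.div_div_eq_div_mul, ← Nat.div_div_eq_div_mul, h]
        have hle : (i:ℕ)/2^t ≤ (j:ℕ)/2^t := Nat.div_le_div_right hijn.le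
        by_cases h1 : (i:ℕ)/2^t = (j:ℕ)/2^t
        · have h2 := hmono h1
          have hnc : ¬ ((i:ℕ)/(2*2^t) = (j:ℕ)/(2*2^t) ∧ (i:ℕ)/2^t < (j:ℕ)/2^t) := by
            rintro ⟨-, hc⟩
            omega
          simp [Nmat, hnc, h1, h2]
        · by_cases h2 : (i:ℕ)/2^(t+1) = (j:ℕ)/2^(t+1)
          · have hcond : (i:ℕ)/(2*2^t) = (j:ℕ)/(2*2^t) ∧ (i:ℕ)/2^t < (j:ℕ)/2^t := by
              constructor
              · rw [h2t]; exact h2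
              · omega
            simp [Nmat, hcond, h1, h2]
          · have hnc : ¬ ((i:ℕ)/(2*2^t) = (j:ℕ)/(2*2^t) ∧ (i:ℕ)/2^t < (j:ℕ)/2^t) := by
              rw [h2t]
              rintro ⟨hc, -⟩
              exact h2 hc
            simp [Nmat, hnc, h1, h2]
      rw [Finset.sum_congr rfl termEq, ← Finset.sum_mul,
        Finset.sum_range_sub (fun t => if (i:ℕ)/2^t = (j:ℕ)/2^t then (1:ℝ) else 0)]
      have hK1 : (i:ℕ)/2^(Nat.clog 2 T) = 0 := Nat.div_eq_of_lt (lt_of_lt_of_le i.isLt hTK)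
      have hK2 : (j:ℕ)/2^(Nat.clog 2 T) = 0 := Nat.div_eq_of_lt (lt_of_lt_of_le j.isLt hTK)
      have h0 : ¬ ((i:ℕ)/2^0 = (j:ℕ)/2^0) := by
        simpa using fun h => hij (Fin.ext h)
      rw [if_pos (by rw [hK1, hK2]), if_neg h0]
      ring
    · have hU0 : U i j = 0 := hUpper i j hgt
      have hz : ∀ t ∈ Finset.range (Nat.clog 2 T), (Nmat U (2^t)) i j = 0 := by
        intro t _
        have hji : (j:ℕ) ≤ (i:ℕ) := le_of_lt hgt
        have hled : (j:ℕ)/2^t ≤ (i:ℕ)/2^t := Nat.div_le_div_right hji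
        have hnc : ¬ ((i:ℕ)/(2*2^t) = (j:ℕ)/(2*2^t) ∧ (i:ℕ)/2^t < (j:ℕ)/2^t) := by
          rintro ⟨-, hc⟩
          omega
        simp [Nmat, hnc]
      rw [Finset.sum_eq_zero hz, hU0]
      ring

lemma en_single (i : Fin T) : enorm' (Pi.single i (1:ℝ) : Fin T → ℝ) = 1 := by
  unfold enorm'
  have h : ∑ j, ((Pi.single i (1:ℝ) : Fin T → ℝ) j) ^ 2 = 1 := by
    simp [Pi.single_apply]
  rw [h, Real.sqrt_one]

lemma diag_bound (hUpper : ∀ i j : Fin T, j < i → U i j = 0)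
    (hDiag : ∀ i : Fin T, 0 ≤ U i i)
    (hε : opNorm (Uᵀ * U - 1) < 1) (i : Fin T) :
    |U i i - 1| ≤ opNorm (Uᵀ * U - 1) := by
  set ε := opNorm (Uᵀ * U - 1) with hεdef
  have hε0 : 0 ≤ ε := opNorm_nonneg _
  have hone : enorm' (Pi.single i (1:ℝ) : Fin T → ℝ) = 1 := en_single i
  -- upper bound
  have hcol : enorm' (U.mulVec (Pi.single i 1)) ^ 2 ≤ 1 + ε := by
    have h := quad_upper U (Pi.single i 1)
    rw [hone] at h
    simpa using h
  have hUii_sq : U i i ^ 2 ≤ 1 + ε := by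
    have hk : U.mulVec (Pi.single i 1) i = U i i := by
      rw [Matrix.mulVec_single]
      simp
    have hle : U i i ^ 2 ≤ ∑ k, (U.mulVec (Pi.single i 1) k) ^ 2 := by
      calc U i i ^ 2 = (U.mulVec (Pi.single i 1) i) ^ 2 := by rw [hk]
        _ ≤ _ := Finset.single_le_sum (f := fun k => (U.mulVec (Pi.single i 1) k) ^ 2)
            (fun k _ => sq_nonneg _) (Finset.mem_univ i)
    rw [← en_sq] at hle
    exact hle.trans hcol
  have hup : U i i ≤ 1 + ε := by
    nlinarith [hDiag i]
  -- lower bound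
  have hM := isUnit_of_small U hε
  have hMdet := (Matrix.isUnit_iff_isUnit_det U).1 hM
  have hUV : (U * U⁻¹) i i = 1 := by
    rw [Matrix.mul_nonsing_inv U hMdet]
    simp [Matrix.one_apply]
  have hsingle : (U * U⁻¹) i i = U i i * U⁻¹ i i := by
    rw [Matrix.mul_apply]
    refine Finset.sum_eq_single i (fun k _ hk => ?_) (fun h => absurd (Finset.mem_univ i) h)
    rcases lt_or_gt_of_ne hk with h | h
    · rw [hUpper i k h, zero_mul]
    · rw [inv_upper U hUpper hε k i h, mul_zero]
  have hprod : U i i * U⁻¹ i i = 1 := by rw [← hsingle, hUV]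
  have hVii : |U⁻¹ i i| ≤ (Real.sqrt (1 - ε))⁻¹ := by
    have h1 : U⁻¹.mulVec (Pi.single i 1) i = U⁻¹ i i := by
      rw [Matrix.mulVec_single]
      simp
    have h2 := abs_le_en (U⁻¹.mulVec (Pi.single i 1)) i
    rw [h1] at h2
    have h3 := inv_bound U hε (Pi.single i 1)
    rw [hone, mul_one] at h3
    exact h2.trans h3
  have hr2 : Real.sqrt (1 - ε) ^ 2 = 1 - ε := Real.sq_sqrt (by linarith)
  have hrpos : 0 < Real.sqrt (1 - ε) := Real.sqrt_pos.2 (by linarith)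
  have hlow : Real.sqrt (1 - ε) ≤ U i i := by
    set r := Real.sqrt (1 - ε)
    have hVpos : 0 < U⁻¹ i i := by
      rcases (hDiag i).lt_or_eq with h | h
      · nlinarith
      · exfalso
        rw [← h] at hprod
        simp at hprod
    have hVle : U⁻¹ i i ≤ r⁻¹ := (le_abs_self _).trans hVii
    have step : r * U⁻¹ i i ≤ 1 := by
      have := mul_le_mul_of_nonneg_left hVle hrpos.le
      rwa [mul_inv_cancel₀ (ne_of_gt hrpos)] at this
    calc r = r * (U⁻¹ i i * U i i) := by
          rw [mul_comm (U⁻¹ i i), hprod, mul_one]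
      _ = (r * U⁻¹ i i) * U i i := by ring
      _ ≤ 1 * U i i := mul_le_mul_of_nonneg_right step (hDiag i)
      _ = U i i := one_mul _
  rw [abs_le]
  constructor
  · nlinarith [hrpos]
  · linarith

end FinT

end CholAux

open CholAux

set_option maxHeartbeats 2000000 in
/-- **Perturbation bounds for the Cholesky factor** (Lemma 17).
If `U` is a `T × T` upper triangular matrix with nonnegative diagonal entries and `T ≥ 2`,
then `‖U − I‖_op ≤ 2 log₂(4T) ‖Uᵀ U − I‖_op` and
`‖U − I‖_op² ≤ 9 log₂(4T) ‖Uᵀ U − I‖_op`. -/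
theorem cholesky_perturbation {T : ℕ} (hT : 2 ≤ T)
    (U : Matrix (Fin T) (Fin T) ℝ)
    (hUpper : ∀ i j : Fin T, j < i → U i j = 0)
    (hDiag : ∀ i : Fin T, 0 ≤ U i i) :
    opNorm (U - 1) ≤ 2 * Real.logb 2 (4 * T) * opNorm (Uᵀ * U - 1) ∧
    opNorm (U - 1) ^ 2 ≤ 9 * Real.logb 2 (4 * T) * opNorm (Uᵀ * U - 1) := by
  classical
  set ε := opNorm (Uᵀ * U - 1) with hεdef
  set L := Real.logb 2 (4 * (T:ℝ)) with hLdef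
  have hε0 : 0 ≤ ε := opNorm_nonneg _
  have hT0 : (0:ℝ) < (T:ℝ) := by exact_mod_cast (by omega : 0 < T)
  have hT2R : (2:ℝ) ≤ (T:ℝ) := by exact_mod_cast hT
  have hlog2 : Real.log 2 ≠ 0 := ne_of_gt (Real.log_pos one_lt_two)
  have hlogb8 : Real.logb 2 (8:ℝ) = 3 := by
    rw [show (8:ℝ) = 2^(3:ℕ) by norm_num, Real.logb, Real.log_pow]
    field_simp
    norm_num
  have hL3 : (3:ℝ) ≤ L := by
    rw [hLdef, ← hlogb8]
    exact Real.logb_le_logb_of_le one_lt_two (by norm_num) (by linarith)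
  have hL2 : L = 2 + Real.logb 2 (T:ℝ) := by
    rw [hLdef, Real.logb_mul (by norm_num) (ne_of_gt hT0)]
    congr 1
    rw [show (4:ℝ) = 2^(2:ℕ) by norm_num, Real.logb, Real.log_pow]
    field_simp
    norm_num
  set K := Nat.clog 2 T with hKdef
  have hK1 : 1 ≤ K := by
    rw [hKdef]
    exact Nat.clog_pos one_lt_two hT
  have hKL : (K:ℝ) ≤ L - 1 := by
    have hpow : (2:ℕ)^(K-1) < T := Nat.pow_pred_clog_lt_self one_lt_two (by omega)
    have hle : ((2:ℝ))^(K-1) ≤ (T:ℝ) := by exact_mod_cast hpow.le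
    have hm : Real.logb 2 ((2:ℝ)^(K-1)) = ((K-1:ℕ):ℝ) := by
      rw [Real.logb, Real.log_pow]
      field_simp
    have hmono := Real.logb_le_logb_of_le one_lt_two (by positivity) hle
    rw [hm] at hmono
    have hc : ((K-1:ℕ):ℝ) = (K:ℝ) - 1 := by
      push_cast [hK1]
      ring
    rw [hc] at hmono
    linarith [hL2.ge, hmono]
  by_cases hcase : ε ≤ 1/2
  · -- small case
    have hε1 : ε < 1 := by linarith
    have hκ32 : (Real.sqrt (1-ε))⁻¹ ≤ 3/2 := by
      have h1 : Real.sqrt (1/2) ≤ Real.sqrt (1-ε) := Real.sqrt_le_sqrt (by linarith)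
      have h2 : (2/3:ℝ) ≤ Real.sqrt (1/2) := by
        nlinarith [Real.sq_sqrt (by norm_num : (0:ℝ) ≤ 1/2), Real.sqrt_nonneg (1/2)]
      have h3 : (2/3:ℝ) ≤ Real.sqrt (1-ε) := h2.trans h1
      calc (Real.sqrt (1-ε))⁻¹ ≤ (2/3:ℝ)⁻¹ := by
            apply inv_anti₀ (by norm_num) h3
        _ = 3/2 := by norm_num
    have hd_le : opNorm (U - 1) ≤ (1 + (3/2) * K) * ε := by
      apply opNorm_le (mul_nonneg (by positivity) hε0)
      intro v
      have hdecomp := decomp U hUpper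
      rw [← hKdef] at hdecomp
      rw [hdecomp, Matrix.add_mulVec, CholAux.sum_mulVec]
      refine le_trans (en_add_le _ _) ?_
      have hD : enorm' ((Matrix.diagonal fun i => U i i - 1).mulVec v) ≤ ε * enorm' v :=
        en_diag_mulVec_le hε0 _ (fun i => diag_bound U hUpper hDiag hε1 i) v
      have hsum : enorm' (∑ t ∈ Finset.range K, (Nmat U (2^t)).mulVec v)
          ≤ ∑ _t ∈ Finset.range K, ((Real.sqrt (1-ε))⁻¹ * ε * enorm' v) := by
        refine (en_sum_le _ _).trans (Finset.sum_le_sum fun t _ => ?_)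
        exact level_en_le U hUpper hε1 (pow_pos two_pos t) v
      rw [Finset.sum_const, Finset.card_range, nsmul_eq_mul] at hsum
      have hv0 := en_nonneg v
      have hK0 : (0:ℝ) ≤ (K:ℝ) := Nat.cast_nonneg K
      have hκε : (Real.sqrt (1-ε))⁻¹ * ε ≤ (3/2) * ε :=
        mul_le_mul_of_nonneg_right hκ32 hε0
      calc enorm' ((Matrix.diagonal fun i => U i i - 1).mulVec v)
            + enorm' (∑ t ∈ Finset.range K, (Nmat U (2^t)).mulVec v)
          ≤ ε * enorm' v + (K:ℝ) * ((Real.sqrt (1-ε))⁻¹ * ε * enorm' v) := by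
            linarith [hD, hsum]
        _ ≤ ε * enorm' v + (K:ℝ) * ((3/2) * ε * enorm' v) := by
            have := mul_le_mul_of_nonneg_right hκε hv0
            nlinarith
        _ = (1 + (3/2) * K) * ε * enorm' v := by ring
        _ = (1 + (3/2) * K) * ε * enorm' v := rfl
    have hcoef : (1 + (3/2) * (K:ℝ)) ≤ 2*L := by linarith
    have hfirst : opNorm (U - 1) ≤ 2 * L * ε := by
      refine hd_le.trans ?_
      exact mul_le_mul_of_nonneg_right hcoef hε0
    have hcrude : opNorm (U - 1) ≤ 9/4 := by
      apply opNorm_le (by norm_num)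
      intro v
      have h1 : enorm' ((U-1).mulVec v) ≤ enorm' (U.mulVec v) + enorm' v := by
        rw [Matrix.sub_mulVec, Matrix.one_mulVec]
        exact en_sub_le _ _
      have h2 := en_M_le U v
      rw [← hεdef] at h2
      have h3 : Real.sqrt (1+ε) ≤ 5/4 := by
        nlinarith [Real.sq_sqrt (by linarith : (0:ℝ) ≤ 1+ε), Real.sqrt_nonneg (1+ε)]
      have hv0 := en_nonneg v
      nlinarith [mul_le_mul_of_nonneg_right h3 hv0]
    refine ⟨hfirst, ?_⟩
    have hd0 := opNorm_nonneg (U - 1)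
    have hLε : 0 ≤ L * ε := mul_nonneg (by linarith) hε0
    nlinarith [mul_le_mul hcrude hfirst hd0 (by norm_num : (0:ℝ) ≤ 9/4)]
  · -- crude case
    push_neg at hcase
    have hs := Real.sq_sqrt (by linarith : (0:ℝ) ≤ 1+ε)
    have hs0 := Real.sqrt_nonneg (1+ε)
    have hA : opNorm (U - 1) ≤ 1 + Real.sqrt (1+ε) := by
      apply opNorm_le (by positivity)
      intro v
      have h1 : enorm' ((U-1).mulVec v) ≤ enorm' (U.mulVec v) + enorm' v := by
        rw [Matrix.sub_mulVec, Matrix.one_mulVec]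
        exact en_sub_le _ _
      have h2 := en_M_le U v
      rw [← hεdef] at h2
      have hv0 := en_nonneg v
      nlinarith
    have hd0 := opNorm_nonneg (U - 1)
    have h2s : 2*Real.sqrt (1+ε) ≤ 2 + ε := by nlinarith
    have hLe0 : 0 ≤ (L - 3) * ε := mul_nonneg (by linarith) hε0
    constructor
    · have hstep : 1 + Real.sqrt (1+ε) ≤ 2*L*ε := by nlinarith
      exact hA.trans hstep
    · have h4 : opNorm (U-1)^2 ≤ (1 + Real.sqrt (1+ε))^2 := by nlinarith
      have h5 : (1 + Real.sqrt (1+ε))^2 ≤ 4 + 2*ε := by nlinarith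
      have h6 : 4 + 2*ε ≤ 9*L*ε := by nlinarith
      linarith

end
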